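/- If y ∈ P_HK is B-good for a family B of s-t cuts, x* ∈ P_HK, z = (x* + y)/2, and T ⊆ supp(y) is a spanning tree, then z/2 lies in the dominant of the Q_T-join polytope, where Q_T = odd(T) △ {s,t}, provided every s-t cut C ∉ B satisfies x*(δ(C)) ≥ 3. -/

import Mathlib

open Finset

variable {V E : Type*}

section Defs
variable [DecidableEq V] [Fintype E] [DecidableEq E]

/-- Edges of the cut `δ(C)`: edges with exactly one endpoint in `C`. -/
def cutE (f g : E → V) (C : Finset V) : Finset E :=
  Finset.univ.filter fun e => ¬((f e ∈ C) ↔ (g e ∈ C))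

/-- `y(δ(C))`, the total `y`-value of the cut `δ(C)`. -/
def cutVal (f g : E → V) (y : E → ℝ) (C : Finset V) : ℝ :=
  ∑ e ∈ cutE f g C, y e

/-- Degree of vertex `v` in the edge set `T`. -/
def degIn (f g : E → V) (T : Finset E) (v : V) : ℕ :=
  (T.filter fun e => f e = v ∨ g e = v).card

/-- `odd(T)`: vertices of odd degree with respect to `T`. -/
def oddVerts [Fintype V] (f g : E → V) (T : Finset E) : Finset V :=
  Finset.univ.filter fun v => Odd (degIn f g T v)

/-- Adjacency via an edge of `T`. -/
def adjIn (f g : E → V) (T : Finset E) (a b : V) : Prop :=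
  ∃ e ∈ T, (f e = a ∧ g e = b) ∨ (f e = b ∧ g e = a)

/-- `T` is a spanning tree: it connects all vertices and has `|V| - 1` edges. -/
def isSpanningTree [Fintype V] (f g : E → V) (T : Finset E) : Prop :=
  (∀ a b : V, Relation.ReflTransGen (adjIn f g T) a b) ∧
  T.card = Fintype.card V - 1

/-- Membership in the Held-Karp Path TSP polytope `P_HK` with endpoints `s`, `t`. -/
def memHK [Fintype V] (f g : E → V) (s t : V) (y : E → ℝ) : Prop :=
  (∀ e, 0 ≤ y e) ∧
  (∀ C : Finset V, C.Nonempty → C ≠ Finset.univ → (s ∈ C ↔ t ∈ C) →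
    2 ≤ cutVal f g y C) ∧
  (∀ C : Finset V, ¬(s ∈ C ↔ t ∈ C) → 1 ≤ cutVal f g y C) ∧
  (∀ v : V, v ≠ s → v ≠ t → cutVal f g y {v} = 2) ∧
  cutVal f g y {s} = 1 ∧ cutVal f g y {t} = 1

/-- `y` is `ℬ`-good: on each cut of the family, the load is at least `3`, or it is
exactly `1` with `y` integral on the cut. -/
def isGood (f g : E → V) (y : E → ℝ) (ℬ : Set (Finset V)) : Prop :=
  ∀ C ∈ ℬ, 3 ≤ cutVal f g y C ∨
    (cutVal f g y C = 1 ∧ ∀ e ∈ cutE f g C, y e = 0 ∨ y e = 1)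

/-- `E[W]`: edges with both endpoints in `W`. -/
def edgesIn (f g : E → V) (W : Finset V) : Finset E :=
  Finset.univ.filter fun e => f e ∈ W ∧ g e ∈ W

/-- Membership in the spanning tree polytope of the graph (Edmonds' description). -/
def memST [Fintype V] (f g : E → V) (x : E → ℝ) : Prop :=
  (∀ e, 0 ≤ x e) ∧
  (∑ e, x e) = (Fintype.card V : ℝ) - 1 ∧
  ∀ W : Finset V, W.Nonempty → ∑ e ∈ edgesIn f g W, x e ≤ (W.card : ℝ) - 1

/-- Membership in the spanning tree polytope of the induced subgraph `G[W]`,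
viewed in `ℝ^E` with coordinates outside `E[W]` equal to zero. -/
def memSTon (f g : E → V) (W : Finset V) (x : E → ℝ) : Prop :=
  (∀ e, 0 ≤ x e) ∧ (∀ e, e ∉ edgesIn f g W → x e = 0) ∧
  (∑ e ∈ edgesIn f g W, x e) = (W.card : ℝ) - 1 ∧
  ∀ S : Finset V, S ⊆ W → S.Nonempty → ∑ e ∈ edgesIn f g S, x e ≤ (S.card : ℝ) - 1

/-- Membership in the Held-Karp relaxation `P_HK(W, u, v)` for `u`-`v` Path TSP on the
induced subgraph `G[W]`, viewed in `ℝ^E` with coordinates outside `E[W]` equal to zero. -/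
def memHKon (f g : E → V) (W : Finset V) (u v : V) (x : E → ℝ) : Prop :=
  (∀ e, 0 ≤ x e) ∧
  (∀ e, e ∉ edgesIn f g W → x e = 0) ∧
  (∀ C : Finset V, C ⊆ W → C.Nonempty → C ≠ W → (u ∈ C ↔ v ∈ C) →
    2 ≤ cutVal f g x C) ∧
  (∀ C : Finset V, C ⊆ W → ¬(u ∈ C ↔ v ∈ C) → 1 ≤ cutVal f g x C) ∧
  (∀ w ∈ W, w ≠ u → w ≠ v → cutVal f g x {w} = 2) ∧
  (u ≠ v → cutVal f g x {u} = 1 ∧ cutVal f g x {v} = 1)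

end Defs

set_option linter.unusedSectionVars false

section Helper7
variable [Fintype V] [DecidableEq V] [Fintype E] [DecidableEq E]

lemma cutE_compl (f g : E → V) (C : Finset V) : cutE f g (Finset.univ \ C) = cutE f g C := by
  ext e; simp [cutE]; tauto

lemma sum_deg (f g : E → V) (hloop : ∀ e, f e ≠ g e) (T : Finset E) (C : Finset V) :
    ∑ v ∈ C, degIn f g T v =
      2 * (T.filter fun e => f e ∈ C ∧ g e ∈ C).card +
        (T.filter (· ∈ cutE f g C)).card := by
  have step1 : ∑ v ∈ C, degIn f g T v
      = ∑ e ∈ T, ((if f e ∈ C then 1 else 0) + (if g e ∈ C then 1 else 0)) := by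
    simp only [degIn, Finset.card_filter]
    rw [Finset.sum_comm]
    refine Finset.sum_congr rfl fun e _ => ?_
    have h1 : ∑ v ∈ C, (if f e = v ∨ g e = v then (1:ℕ) else 0)
        = ∑ v ∈ C, ((if f e = v then (1:ℕ) else 0) + (if g e = v then 1 else 0)) := by
      refine Finset.sum_congr rfl fun v _ => ?_
      by_cases h1 : f e = v <;> by_cases h2 : g e = v <;>
        simp_all [hloop e]
      exact absurd (h1.trans h2.symm) (hloop e)
    rw [h1, Finset.sum_add_distrib, Finset.sum_ite_eq, Finset.sum_ite_eq]
  rw [step1]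
  have step2 : ∀ e ∈ T, ((if f e ∈ C then 1 else 0) + (if g e ∈ C then 1 else 0))
      = 2 * (if f e ∈ C ∧ g e ∈ C then 1 else 0) + (if e ∈ cutE f g C then 1 else 0) := by
    intro e _
    by_cases h1 : f e ∈ C <;> by_cases h2 : g e ∈ C <;> simp [cutE, h1, h2]
  rw [Finset.sum_congr rfl step2, Finset.sum_add_distrib, ← Finset.mul_sum,
    ← Finset.sum_filter, ← Finset.sum_filter, Finset.card_eq_sum_ones,
    Finset.card_eq_sum_ones]

lemma cut_parity (f g : E → V) (hloop : ∀ e, f e ≠ g e) (T : Finset E) (C : Finset V) :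
    (T.filter (· ∈ cutE f g C)).card % 2
      = (C.filter fun v => Odd (degIn f g T v)).card % 2 := by
  have h := sum_deg f g hloop T C
  have h2 := (Finset.odd_sum_iff_odd_card_odd (s := C) (fun v => degIn f g T v))
  rw [Nat.odd_iff, Nat.odd_iff] at h2
  omega

lemma cross_of_path (f g : E → V) (T : Finset E) (C : Finset V) :
    ∀ {a b : V}, Relation.ReflTransGen (adjIn f g T) a b → a ∈ C → b ∉ C →
      ∃ e ∈ T, e ∈ cutE f g C := by
  intro a b h
  induction h with
  | refl => intro h1 h2; exact absurd h1 h2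
  | @tail c d hac hcd ih =>
    intro ha hd
    by_cases hc : c ∈ C
    · obtain ⟨e, heT, h'⟩ := hcd
      refine ⟨e, heT, ?_⟩
      simp only [cutE, Finset.mem_filter, Finset.mem_univ, true_and]
      rcases h' with ⟨h1, h2⟩ | ⟨h1, h2⟩ <;> rw [h1, h2] <;> tauto
    · exact ih ha hc

lemma card_symmDiff_parity (A B : Finset V) :
    (symmDiff A B).card % 2 = (A.card + B.card) % 2 := by
  have h1 : (A \ B).card + (A ∩ B).card = A.card := Finset.card_sdiff_add_card_inter A B
  have h2 : (B \ A).card + (B ∩ A).card = B.card := Finset.card_sdiff_add_card_inter B A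
  have h3 : (symmDiff A B).card = (A \ B).card + (B \ A).card := by
    rw [symmDiff_def, Finset.sup_eq_union,
      Finset.card_union_of_disjoint disjoint_sdiff_sdiff]
  rw [Finset.inter_comm] at h2
  omega
end Helper7



/-- If `y ∈ P_HK` is `ℬ`-good, `x* ∈ P_HK`, every `s`-`t` cut outside `ℬ`
has `x*`-load at least `3`, and `T ⊆ supp(y)` is a spanning tree, then
`z/2 = (x* + y)/4` lies in the dominant of the `Q_T`-join polytope, where
`Q_T = odd(T) △ {s,t}`. -/
theorem stmt_7 [Fintype V] [DecidableEq V] [Fintype E] [DecidableEq E]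
    (f g : E → V) (hloop : ∀ e, f e ≠ g e) (s t : V) (hst : s ≠ t)
    (ℬ : Set (Finset V)) (hℬ : ∀ C ∈ ℬ, s ∈ C ∧ t ∉ C)
    (y xs : E → ℝ) (hy : memHK f g s t y) (hxs : memHK f g s t xs)
    (hgood : isGood f g y ℬ)
    (hout : ∀ C : Finset V, s ∈ C → t ∉ C → C ∉ ℬ → 3 ≤ cutVal f g xs C)
    (T : Finset E) (hTsupp : ∀ e ∈ T, 0 < y e) (hT : isSpanningTree f g T) :
    (∀ e, 0 ≤ (xs e + y e) / 4) ∧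
    ∀ C : Finset V, Odd ((C ∩ symmDiff (oddVerts f g T) {s, t}).card) →
      1 ≤ cutVal f g (fun e => (xs e + y e) / 4) C := by
  
  obtain ⟨hy0, hy2, hy1, _, _, _⟩ := hy
  obtain ⟨hx0, hx2, hx1, _, _, _⟩ := hxs
  constructor
  · intro e; have := hy0 e; have := hx0 e; linarith
  intro C hoddC
  set Q : Finset V := symmDiff (oddVerts f g T) {s, t} with hQdef
  have hsplit : cutVal f g (fun e => (xs e + y e) / 4) C
      = (cutVal f g xs C + cutVal f g y C) / 4 := by
    rw [cutVal, cutVal, cutVal, ← Finset.sum_add_distrib, ← Finset.sum_div]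
  rw [hsplit]
  rw [le_div_iff₀ (by norm_num : (0:ℝ) < 4), one_mul]
  -- |Q| is even
  have hQeven : Q.card % 2 = 0 := by
    have h1 : (T.filter (· ∈ cutE f g Finset.univ)).card % 2
        = (Finset.univ.filter fun v => Odd (degIn f g T v)).card % 2 :=
      cut_parity f g hloop T Finset.univ
    have h2 : cutE f g Finset.univ = ∅ := by simp [cutE]
    rw [h2] at h1
    simp only [Finset.notMem_empty, Finset.filter_false, Finset.card_empty] at h1
    have h3 := card_symmDiff_parity (oddVerts f g T) ({s, t} : Finset V)
    have h4 : ({s, t} : Finset V).card = 2 := Finset.card_pair hst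
    have h5 : (oddVerts f g T).card % 2 = 0 := by
      simpa [oddVerts] using h1.symm
    rw [hQdef]
    omega
  have hodd' : (C ∩ Q).card % 2 = 1 := Nat.odd_iff.mp hoddC
  have hne : C.Nonempty := by
    have hpos : 0 < (C ∩ Q).card := by omega
    rcases Finset.card_pos.mp hpos with ⟨v, hv⟩
    exact ⟨v, Finset.mem_of_mem_inter_left hv⟩
  have hnu : C ≠ Finset.univ := by
    intro h
    rw [h, Finset.univ_inter] at hodd'
    omega
  by_cases hiff : (s ∈ C ↔ t ∈ C)
  · have g1 := hy2 C hne hnu hiff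
    have g2 := hx2 C hne hnu hiff
    linarith
  · set C' : Finset V := if s ∈ C then C else Finset.univ \ C with hC'def
    have hsC' : s ∈ C' := by
      by_cases h : s ∈ C
      · simp [hC'def, h]
      · have ht : t ∈ C := by tauto
        simp [hC'def, h]
    have htC' : t ∉ C' := by
      by_cases h : s ∈ C
      · have : t ∉ C := by tauto
        simp [hC'def, h, this]
      · have ht : t ∈ C := by tauto
        simp [hC'def, h, ht]
    have hcutE : cutE f g C' = cutE f g C := by
      by_cases h : s ∈ C
      · simp [hC'def, h]
      · simp only [hC'def, h, if_false]; exact cutE_compl f g C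
    have hcvx : cutVal f g xs C' = cutVal f g xs C := by rw [cutVal, cutVal, hcutE]
    have hcvy : cutVal f g y C' = cutVal f g y C := by rw [cutVal, cutVal, hcutE]
    have hoddC' : (C' ∩ Q).card % 2 = 1 := by
      by_cases h : s ∈ C
      · simpa [hC'def, h] using hodd'
      · have hsd : (Finset.univ \ C) ∩ Q = Q \ C := by
          ext v; simp [Finset.mem_sdiff]; tauto
        have hcc : (Q \ C).card + (Q ∩ C).card = Q.card :=
          Finset.card_sdiff_add_card_inter Q C
        rw [Finset.inter_comm] at hcc
        simp only [hC'def, h, if_false, hsd]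
        omega
    have hnotiff : ¬(s ∈ C' ↔ t ∈ C') := fun h => htC' (h.mp hsC')
    by_cases hB : C' ∈ ℬ
    · rcases hgood C' hB with h3 | ⟨h1', hint⟩
      · have g2 := hx1 C' hnotiff
        rw [hcvx] at g2; rw [hcvy] at h3
        linarith
      · exfalso
        obtain ⟨e0, he0T, he0c⟩ := cross_of_path f g T C' (hT.1 s t) hsC' htC'
        set K := T.filter (· ∈ cutE f g C') with hKdef
        have hKne : K.Nonempty := ⟨e0, Finset.mem_filter.mpr ⟨he0T, he0c⟩⟩
        have hone : ∀ e ∈ K, y e = 1 := by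
          intro e he
          rw [hKdef, Finset.mem_filter] at he
          rcases hint e he.2 with h0 | h1
          · exact absurd h0 (ne_of_gt (hTsupp e he.1))
          · exact h1
        have hsub : K ⊆ cutE f g C' := fun e he => (Finset.mem_filter.mp he).2
        have hsum : (K.card : ℝ) ≤ cutVal f g y C' := by
          have e1 : (K.card : ℝ) = ∑ e ∈ K, y e := by
            rw [Finset.sum_congr rfl hone]; simp
          rw [e1, cutVal]
          exact Finset.sum_le_sum_of_subset_of_nonneg hsub fun e _ _ => hy0 e
        have hk1 : K.card = 1 := by
          rw [h1'] at hsum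
          have hle : K.card ≤ 1 := by exact_mod_cast hsum
          have hge : 1 ≤ K.card := Finset.card_pos.mpr hKne
          omega
        have hp := cut_parity f g hloop T C'
        rw [← hKdef, hk1] at hp
        have hfo : C' ∩ oddVerts f g T = C'.filter fun v => Odd (degIn f g T v) := by
          ext v; simp [oddVerts, Finset.mem_filter]
        have hss : C' ∩ ({s, t} : Finset V) = {s} := by
          ext v
          simp only [Finset.mem_inter, Finset.mem_insert, Finset.mem_singleton]
          constructor
          · rintro ⟨hv, rfl | rfl⟩
            · rfl
            · exact absurd hv htC'
          · rintro rfl; exact ⟨hsC', Or.inl rfl⟩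
        have hdist : C' ∩ Q
            = symmDiff (C' ∩ oddVerts f g T) (C' ∩ ({s, t} : Finset V)) := by
          rw [hQdef, ← Finset.inf_eq_inter]
          exact inf_symmDiff_distrib_left _ _ _
        have hcs := card_symmDiff_parity (C' ∩ oddVerts f g T) (C' ∩ ({s, t} : Finset V))
        rw [hdist, hcs, hfo, hss] at hoddC'
        simp only [Finset.card_singleton] at hoddC'
        omega
    · have g2 := hout C' hsC' htC' hB
      have g1 := hy1 C' hnotiff
      rw [hcvx] at g2; rw [hcvy] at g1
      linarith
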